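/- There are no ruled K^α-translators (for non-cylindrical, non-developable ruled surfaces): if λ: I → ℝ is nowhere zero, w'(s) ≠ 0, and the identity -(-1)^α λ(s)^{2α}|w'(s)| + λ(s)⟨w'(s),v⟩(λ(s)²+t²)^{(4α-1)/2} + (w'(s),w(s),v)·t·(λ(s)²+t²)^{(4α-1)/2} = 0 holds for all t ∈ ℝ and s ∈ I with α an integer, α ≠ 1/4 (automatic), then -(-1)^α λ^{2α}|w'| = 0, a contradiction. -/
import Mathlib


/-- There are no ruled `K^α`-translators: the identity
`A + B(l²+t²)^{(4α-1)/2} + C t (l²+t²)^{(4α-1)/2} = 0` for all `t`, with `A ≠ 0`, `l ≠ 0`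
and `α` a nonzero integer, is impossible. -/
theorem stmt_17 (α : ℤ) (hα : α ≠ 0) (l A B C : ℝ) (hl : l ≠ 0) (hA : A ≠ 0)
    (h : ∀ t : ℝ,
      A + B * (l ^ 2 + t ^ 2) ^ ((4 * (α : ℝ) - 1) / 2)
        + C * t * (l ^ 2 + t ^ 2) ^ ((4 * (α : ℝ) - 1) / 2) = 0) :
    False := by
  set e : ℝ := (4 * (α : ℝ) - 1) / 2 with he
  have he0 : e ≠ 0 := by
    rw [he, div_ne_zero_iff]
    refine ⟨fun hc => ?_, by norm_num⟩
    have : (4 * α : ℤ) = 1 := by exact_mod_cast (by linarith : (4 * (α : ℝ)) = 1)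
    omega
  have hC : C = 0 := by
    have h1 := h 1
    have h2 := h (-1)
    have hpos : (0:ℝ) < l ^ 2 + 1 ^ 2 := by positivity
    have hp := Real.rpow_pos_of_pos hpos e
    have hq : l ^ 2 + (-1:ℝ) ^ 2 = l ^ 2 + 1 ^ 2 := by norm_num
    rw [hq] at h2
    nlinarith
  have h0 := h 0
  have hl2 := h l
  rw [hC] at h0 hl2
  have hP : (0:ℝ) < (l ^ 2) ^ e := Real.rpow_pos_of_pos (by positivity) e
  have hmul : (l ^ 2 + l ^ 2 : ℝ) ^ e = (2:ℝ) ^ e * (l ^ 2) ^ e := by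
    rw [show (l ^ 2 + l ^ 2 : ℝ) = 2 * l ^ 2 by ring,
      Real.mul_rpow (by norm_num) (by positivity)]
  rw [hmul] at hl2
  have h0' : A + B * (l ^ 2) ^ e = 0 := by
    have : l ^ 2 + (0:ℝ) ^ 2 = l ^ 2 := by norm_num
    rw [this] at h0; linarith
  have hQ : (2:ℝ) ^ e ≠ 1 := by
    intro hq
    have := Real.log_rpow (by norm_num : (0:ℝ) < 2) e
    rw [hq, Real.log_one] at this
    have h2 : Real.log 2 ≠ 0 := Real.log_ne_zero_of_pos_of_ne_one (by norm_num) (by norm_num)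
    exact he0 (by
      rcases mul_eq_zero.mp this.symm with h' | h'
      · exact h'
      · exact absurd h' h2)
  have hB : B = 0 := by
    have : B * (l ^ 2) ^ e * (1 - (2:ℝ) ^ e) = 0 := by nlinarith
    rcases mul_eq_zero.mp this with h' | h'
    · rcases mul_eq_zero.mp h' with h'' | h''
      · exact h''
      · exact absurd h'' (ne_of_gt hP)
    · exact absurd (by linarith : (2:ℝ) ^ e = 1) hQ
  rw [hB] at h0'
  simp at h0'
  exact hA h0'
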